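/- Let n be a positive integer and let A be a real-linear map from the real vector space of Hermitian n×n complex matrices to itself. Then ⟨A(X), Y⟩ = 0 holds for all positive semidefinite matrices X, Y with ⟨X, Y⟩ = 0 if and only if v* A(u u*) v = 0 for all u, v ∈ ℂⁿ with v* u = 0. -/

import Mathlib

open Matrix
open scoped ComplexOrder

private lemma trace_mul_vmv (n : ℕ) (M : Matrix (Fin n) (Fin n) ℂ) (v : Fin n → ℂ) :
    (M * vecMulVec v (star v)).trace = star v ⬝ᵥ (M *ᵥ v) := by
  simp only [trace, diag_apply, mul_apply, vecMulVec_apply, dotProduct, mulVec,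
    Pi.star_apply, Finset.mul_sum]
  refine Finset.sum_congr rfl fun a _ => Finset.sum_congr rfl fun b _ => by ring

private lemma psd_vmv (n : ℕ) (u : Fin n → ℂ) : (vecMulVec u (star u)).PosSemidef := by
  have : vecMulVec u (star u) = (replicateCol Unit u) * (replicateCol Unit u)ᴴ := by
    ext a b
    simp [vecMulVec_apply, mul_apply]
  rw [this]
  exact posSemidef_self_mul_conjTranspose _

private lemma trace_vmv_mul_vmv (n : ℕ) (u v : Fin n → ℂ) :
    (vecMulVec u (star u) * vecMulVec v (star v)).trace
      = star (star v ⬝ᵥ u) * (star v ⬝ᵥ u) := by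
  rw [trace_mul_vmv]
  have : vecMulVec u (star u) *ᵥ v = (star u ⬝ᵥ v) • u := by
    ext a
    simp only [vecMulVec_apply, mulVec, dotProduct, Pi.smul_apply, Finset.sum_apply,
      Pi.star_apply, smul_eq_mul, Finset.sum_mul, Finset.mul_sum]
    exact Finset.sum_congr rfl fun b _ => by ring
  rw [this, dotProduct_smul, star_dotProduct]
  simp [smul_eq_mul, mul_comm]

private lemma psd_decomp (n : ℕ) {X : Matrix (Fin n) (Fin n) ℂ} (hX : X.PosSemidef) :
    ∃ (c : Fin n → ℝ) (u : Fin n → Fin n → ℂ), (∀ i, 0 ≤ c i) ∧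
      X = ∑ i, c i • vecMulVec (u i) (star (u i)) := by
  have hH := hX.1
  refine ⟨hH.eigenvalues, fun i a => (hH.eigenvectorUnitary : Matrix (Fin n) (Fin n) ℂ) a i,
    fun i => hX.eigenvalues_nonneg i, ?_⟩
  conv_lhs => rw [hH.spectral_theorem]
  ext a b
  rw [Unitary.conjStarAlgAut_apply, mul_apply]
  simp only [mul_diagonal, Function.comp_apply, Matrix.sum_apply,
    Matrix.smul_apply, vecMulVec_apply, Pi.star_apply, star_apply, Complex.real_smul,
    smul_eq_mul, RCLike.star_def]
  exact Finset.sum_congr rfl fun k _ => (mul_assoc _ _ _).trans (mul_left_comm _ _ _)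

/-- **Lie-algebra condition on rank-one matrices suffices.**
For a real-linear map `A` on the space of Hermitian `n × n` complex matrices (i.e. a real-linear
map on matrices sending Hermitian matrices to Hermitian matrices), one has
`⟨A X, Y⟩ = Tr((A X) Y) = 0` for all positive semidefinite `X, Y` with `⟨X, Y⟩ = Tr(X Y) = 0`
if and only if `v* A(u u*) v = 0` for all `u, v ∈ ℂⁿ` with `v* u = 0`. -/
theorem lie_algebra_iff_rank_one (n : ℕ) (hn : 0 < n)
    (A : Matrix (Fin n) (Fin n) ℂ →ₗ[ℝ] Matrix (Fin n) (Fin n) ℂ)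
    (hA : ∀ X : Matrix (Fin n) (Fin n) ℂ, X.IsHermitian → (A X).IsHermitian) :
    (∀ X Y : Matrix (Fin n) (Fin n) ℂ, X.PosSemidef → Y.PosSemidef →
        (X * Y).trace = 0 → ((A X) * Y).trace = 0) ↔
      ∀ u v : Fin n → ℂ, star v ⬝ᵥ u = 0 →
        star v ⬝ᵥ (A (vecMulVec u (star u)) *ᵥ v) = 0 := by
  constructor
  · intro h u v huv
    rw [← trace_mul_vmv]
    refine h _ _ (psd_vmv n u) (psd_vmv n v) ?_
    rw [trace_vmv_mul_vmv, huv]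
    simp
  · intro h X Y hX hY htr
    obtain ⟨c, u, hc, hXe⟩ := psd_decomp n hX
    obtain ⟨d, v, hd, hYe⟩ := psd_decomp n hY
    -- expand traces
    have expand : ∀ M : Fin n → Matrix (Fin n) (Fin n) ℂ,
        ((∑ i, c i • M i) * Y).trace
          = ∑ i, ∑ j, (c i * d j) • (M i * vecMulVec (v j) (star (v j))).trace := by
      intro M
      rw [hYe, Finset.sum_mul]
      rw [trace_sum]
      refine Finset.sum_congr rfl fun i _ => ?_
      rw [Finset.mul_sum, trace_sum]
      refine Finset.sum_congr rfl fun j _ => ?_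
      rw [smul_mul_assoc, mul_smul_comm, trace_smul, trace_smul, smul_smul]
    -- the orthogonality per term
    have htr' : ∀ i j, c i * d j ≠ 0 → star (v j) ⬝ᵥ u i = 0 := by
      intro i j hij
      have e1 : (X * Y).trace
          = ∑ i, ∑ j, ((c i * d j * Complex.normSq (star (v j) ⬝ᵥ u i) : ℝ) : ℂ) := by
        rw [hXe, expand]
        refine Finset.sum_congr rfl fun i _ => Finset.sum_congr rfl fun j _ => ?_
        rw [trace_vmv_mul_vmv, Complex.real_smul, RCLike.star_def]
        push_cast [Complex.normSq_eq_conj_mul_self]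
        all_goals ring
      rw [htr] at e1
      have e2 : ∑ i, ∑ j, (c i * d j * Complex.normSq (star (v j) ⬝ᵥ u i)) = 0 := by
        have := e1.symm
        push_cast at this
        exact_mod_cast this
      have hnn : ∀ p ∈ Finset.univ (α := Fin n), 0 ≤ ∑ j, (c p * d j * Complex.normSq (star (v j) ⬝ᵥ u p)) :=
        fun p _ => Finset.sum_nonneg fun j _ =>
          mul_nonneg (mul_nonneg (hc p) (hd j)) (Complex.normSq_nonneg _)
      have h1 := (Finset.sum_eq_zero_iff_of_nonneg hnn).mp e2 i (Finset.mem_univ i)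
      have h2 := (Finset.sum_eq_zero_iff_of_nonneg (fun j _ =>
          mul_nonneg (mul_nonneg (hc i) (hd j)) (Complex.normSq_nonneg _))).mp h1 j
          (Finset.mem_univ j)
      have : Complex.normSq (star (v j) ⬝ᵥ u i) = 0 := by
        rcases mul_eq_zero.mp h2 with h | h
        · exact absurd h hij
        · exact h
      exact Complex.normSq_eq_zero.mp this
    -- conclude
    rw [hXe, map_sum]
    have : ∀ i, A (c i • vecMulVec (u i) (star (u i)))
        = c i • A (vecMulVec (u i) (star (u i))) := fun i => map_smul A _ _
    simp_rw [this]
    rw [expand]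
    refine Finset.sum_eq_zero fun i _ => Finset.sum_eq_zero fun j _ => ?_
    rcases eq_or_ne (c i * d j) 0 with hz | hz
    · rw [hz, zero_smul]
    · rw [trace_mul_vmv, h (u i) (v j) (htr' i j hz), smul_zero]
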